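/- For a finite abelian group G with |G| ≥ 2, for any zero-sum sequence B over G and any nonzero g ∈ G, one has max L(B·(-g)·g) = 1 + max L(B). Consequently, D_{k+1}(G) ≥ D_k(G) + 2 for each k ≥ 1. -/

import Mathlib

open Multiset

/-- A nonempty zero-sum sequence (multiset) over `G`. -/
def IsZeroSumSeq {G : Type*} [AddCommGroup G] (S : Multiset G) : Prop :=
  S ≠ 0 ∧ S.sum = 0

/-- A minimal zero-sum sequence: nonempty, zero-sum, and with no proper
nonempty zero-sum subsequence. -/
def IsMinZeroSum {G : Type*} [AddCommGroup G] (S : Multiset G) : Prop :=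
  S ≠ 0 ∧ S.sum = 0 ∧ ∀ T : Multiset G, T ≤ S → T ≠ 0 → T.sum = 0 → T = S

/-- `ζ` is a factorization of `B` into minimal zero-sum sequences. -/
def IsFactorization {G : Type*} [AddCommGroup G] (ζ : Multiset (Multiset G))
    (B : Multiset G) : Prop :=
  ζ.sum = B ∧ ∀ A ∈ ζ, IsMinZeroSum A

/-- The set of lengths `L(B)` of factorizations of `B` into minimal zero-sum
sequences. -/
def lengthSet {G : Type*} [AddCommGroup G] (B : Multiset G) : Set ℕ :=
  { n | ∃ ζ : Multiset (Multiset G), IsFactorization ζ B ∧ Multiset.card ζ = n }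

/-- `max L(B)`, the maximal length of a factorization of `B` into minimal
zero-sum sequences. -/
noncomputable def maxL {G : Type*} [AddCommGroup G] (B : Multiset G) : ℕ :=
  sSup (lengthSet B)

/-- `S` contains `k` disjoint nonempty zero-sum subsequences. -/
def HasKDisjointZeroSum {G : Type*} [AddCommGroup G] (k : ℕ) (S : Multiset G) : Prop :=
  ∃ T : Multiset (Multiset G), Multiset.card T = k ∧
    (∀ A ∈ T, IsZeroSumSeq A) ∧ T.sum ≤ S

/-- The `k`-wise Davenport constant: the smallest `ℓ` such that every sequence
over `G` of length at least `ℓ` has `k` disjoint nonempty zero-sum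
subsequences. -/
noncomputable def Dk (G : Type*) [AddCommGroup G] (k : ℕ) : ℕ :=
  sInf { ℓ : ℕ | ∀ S : Multiset G, ℓ ≤ Multiset.card S → HasKDisjointZeroSum k S }

/-- `s_{≤ k}(G)` as an extended natural number: the smallest `m` such that every
sequence over `G` of length at least `m` has a nonempty zero-sum subsequence of
length at most `k`. -/
noncomputable def sLE (G : Type*) [AddCommGroup G] (k : ℕ) : ℕ∞ :=
  sInf { m : ℕ∞ | ∀ S : Multiset G, m ≤ (Multiset.card S : ℕ∞) →
    ∃ T ≤ S, T ≠ 0 ∧ T.sum = 0 ∧ Multiset.card T ≤ k }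

/-- `s_{≤ k}(G)` as a natural number (used when it is known to be finite). -/
noncomputable def sleN (G : Type*) [AddCommGroup G] (k : ℕ) : ℕ :=
  sInf { m : ℕ | ∀ S : Multiset G, m ≤ Multiset.card S →
    ∃ T ≤ S, T ≠ 0 ∧ T.sum = 0 ∧ Multiset.card T ≤ k }

/-- `η(G) = s_{≤ exp(G)}(G)`. -/
noncomputable def etaC (G : Type*) [AddCommGroup G] : ℕ :=
  sleN G (AddMonoid.exponent G)

section Aux

variable {G : Type*} [AddCommGroup G]

lemma mem_msum {a : G} {ζ : Multiset (Multiset G)} (h : a ∈ ζ.sum) : ∃ A ∈ ζ, a ∈ A := by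
  induction ζ using Multiset.induction with
  | empty => simp at h
  | cons A ζ ih =>
    rw [Multiset.sum_cons, Multiset.mem_add] at h
    rcases h with h | h
    · exact ⟨A, Multiset.mem_cons_self _ _, h⟩
    · obtain ⟨A', hA', ha⟩ := ih h
      exact ⟨A', Multiset.mem_cons_of_mem hA', ha⟩

lemma card_le_sum_of_ne_zero {ζ : Multiset (Multiset G)} (h : ∀ A ∈ ζ, A ≠ 0) :
    Multiset.card ζ ≤ Multiset.card ζ.sum := by
  induction ζ using Multiset.induction with
  | empty => simp
  | cons A ζ ih =>
    rw [Multiset.sum_cons, Multiset.card_cons, Multiset.card_add]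
    have h1 : 0 < Multiset.card A := Multiset.card_pos.2 (h A (Multiset.mem_cons_self _ _))
    have h2 := ih (fun X hX => h X (Multiset.mem_cons_of_mem hX))
    omega

lemma fact_exists [DecidableEq G] :
    ∀ B : Multiset G, B.sum = 0 → ∃ ζ, IsFactorization ζ B := by
  intro B
  induction B using Multiset.strongInductionOn with
  | _ B ih =>
    intro hB
    by_cases h0 : B = 0
    · exact ⟨0, by simp [IsFactorization, h0], by simp⟩
    · set P : Set ℕ := {m | ∃ T : Multiset G, T ≤ B ∧ T ≠ 0 ∧ T.sum = 0 ∧ Multiset.card T = m}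
      have hPne : P.Nonempty := ⟨Multiset.card B, B, le_refl _, h0, hB, rfl⟩
      obtain ⟨T, hTB, hT0, hTs, hTc⟩ := Nat.sInf_mem hPne
      have hTmin : IsMinZeroSum T := by
        refine ⟨hT0, hTs, fun T' hT' hT'0 hT's => ?_⟩
        have h1 : sInf P ≤ Multiset.card T' :=
          Nat.sInf_le ⟨T', hT'.trans hTB, hT'0, hT's, rfl⟩
        exact Multiset.eq_of_le_of_card_le hT' (hTc ▸ h1)
      have hBT : T + (B - T) = B := add_tsub_cancel_of_le hTB
      have hsub : B - T < B := by
        refine lt_of_le_of_ne tsub_le_self ?_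
        intro he
        have h2 : Multiset.card T + Multiset.card (B - T) = Multiset.card B := by
          rw [← Multiset.card_add, hBT]
        have h3 : Multiset.card (B - T) = Multiset.card B := congrArg _ he
        have h4 : 0 < Multiset.card T := Multiset.card_pos.2 hT0
        omega
      have hsum : (B - T).sum = 0 := by
        have h3 := congrArg Multiset.sum hBT
        rw [Multiset.sum_add, hTs, zero_add, hB] at h3
        exact h3
      obtain ⟨ζ', hζ'⟩ := ih (B - T) hsub hsum
      refine ⟨T ::ₘ ζ', ?_, ?_⟩
      · rw [Multiset.sum_cons, hζ'.1, hBT]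
      · intro A hA
        rcases Multiset.mem_cons.1 hA with h | h
        · exact h ▸ hTmin
        · exact hζ'.2 A h

lemma lengthSet_bddAbove (B : Multiset G) : BddAbove (lengthSet B) := by
  refine ⟨Multiset.card B, fun n hn => ?_⟩
  obtain ⟨ζ, ⟨hsum, hmin⟩, hc⟩ := hn
  calc n = Multiset.card ζ := hc.symm
    _ ≤ Multiset.card ζ.sum := card_le_sum_of_ne_zero (fun A hA => (hmin A hA).1)
    _ = Multiset.card B := by rw [hsum]

lemma maxL_mem [DecidableEq G] (B : Multiset G) (hB : B.sum = 0) :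
    maxL B ∈ lengthSet B := by
  obtain ⟨ζ, hζ⟩ := fact_exists B hB
  exact Nat.sSup_mem ⟨_, ζ, hζ, rfl⟩ (lengthSet_bddAbove B)

lemma pair_min (g : G) (hg : g ≠ 0) : IsMinZeroSum (g ::ₘ (-g) ::ₘ 0) := by
  refine ⟨Multiset.cons_ne_zero, by simp, fun T hT hT0 hTs => ?_⟩
  have hc : Multiset.card T ≤ 2 := by
    have := Multiset.card_le_card hT
    simpa using this
  have hc1 : 1 ≤ Multiset.card T := by
    rwa [Nat.one_le_iff_ne_zero, Ne, Multiset.card_eq_zero]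
  interval_cases h : Multiset.card T
  · obtain ⟨a, ha⟩ := Multiset.card_eq_one.1 h
    subst ha
    have : a ∈ (g ::ₘ (-g) ::ₘ (0 : Multiset G)) :=
      Multiset.mem_of_le hT (Multiset.mem_singleton_self a)
    simp only [Multiset.mem_cons, Multiset.notMem_zero, or_false] at this
    have ha0 : a = 0 := by simpa using hTs
    rcases this with rfl | rfl
    · exact absurd ha0 hg
    · exact absurd (neg_eq_zero.1 ha0) hg
  · exact Multiset.eq_of_le_of_card_le hT (by simp [h])

lemma maxL_cons [DecidableEq G] (B : Multiset G) (hB : B.sum = 0) (g : G) (hg : g ≠ 0) :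
    maxL (g ::ₘ (-g) ::ₘ B) = 1 + maxL B := by
  set B' := g ::ₘ (-g) ::ₘ B with hB'
  have hB's : B'.sum = 0 := by simp [hB', Multiset.sum_cons, hB]
  refine le_antisymm ?_ ?_
  · -- maxL B' ≤ 1 + maxL B
    obtain ⟨ζ0, hζ0⟩ := fact_exists B' hB's
    refine csSup_le ⟨_, ζ0, hζ0, rfl⟩ ?_
    rintro n ⟨ζ, ⟨hsum, hmin⟩, hcard⟩
    have hgB' : g ∈ B' := Multiset.mem_cons_self _ _
    have hgζ : g ∈ ζ.sum := by rw [hsum]; exact hgB'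
    obtain ⟨A, hA, hgA⟩ := mem_msum hgζ
    set ζ₁ := ζ.erase A with hζ₁def
    have hζeq : A ::ₘ ζ₁ = ζ := Multiset.cons_erase hA
    have hAmin := hmin A hA
    have hAe : g ::ₘ A.erase g = A := Multiset.cons_erase hgA
    have hsum1 : A + ζ₁.sum = g ::ₘ (-g) ::ₘ B := by
      rw [← Multiset.sum_cons, hζeq, hsum]
    have hcard1 : n = Multiset.card ζ₁ + 1 := by
      rw [← hcard, ← hζeq, Multiset.card_cons]
    by_cases hcase : -g ∈ A.erase g
    · -- A = {g, -g}
      have hpair : (g ::ₘ (-g) ::ₘ 0 : Multiset G) ≤ A := by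
        rw [← hAe]
        exact Multiset.cons_le_cons g (by rwa [← Multiset.singleton_le] at hcase)
      have hApair : (g ::ₘ (-g) ::ₘ 0 : Multiset G) = A :=
        hAmin.2.2 _ hpair Multiset.cons_ne_zero (by simp)
      have hζ₁B : ζ₁.sum = B := by
        have h5 : (g ::ₘ (-g) ::ₘ 0 : Multiset G) + ζ₁.sum = g ::ₘ (-g) ::ₘ B := by
          rw [hApair]; exact hsum1
        rw [Multiset.cons_add, Multiset.cons_add, zero_add] at h5
        rw [← Multiset.cons_inj_right (-g), ← Multiset.cons_inj_right g]
        exact h5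
      have hmem : Multiset.card ζ₁ ∈ lengthSet B :=
        ⟨ζ₁, ⟨hζ₁B, fun X hX => hmin X (Multiset.mem_of_le (Multiset.erase_le _ _) hX)⟩, rfl⟩
      have h4 : Multiset.card ζ₁ ≤ maxL B := le_csSup (lengthSet_bddAbove B) hmem
      omega
    · -- -g lies in another factor
      have hAsum : A.sum = 0 := hAmin.2.1
      have hAeg : (A.erase g).sum = -g := by
        have h5 : g + (A.erase g).sum = 0 := by rw [← Multiset.sum_cons, hAe]; exact hAsum
        exact eq_neg_of_add_eq_zero_right h5
      have hmemg : -g ∈ ζ₁.sum := by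
        rw [← Multiset.count_pos]
        have h2 := congrArg (Multiset.count (-g)) hsum1
        have h3 : Multiset.count (-g) A = if (-g : G) = g then 1 else 0 := by
          rw [← hAe, Multiset.count_cons, Multiset.count_eq_zero.2 hcase, zero_add]
        simp only [Multiset.count_add, Multiset.count_cons, h3] at h2
        split_ifs at h2 <;> omega
      obtain ⟨A', hA', hgA'⟩ := mem_msum hmemg
      set ζ₂ := ζ₁.erase A' with hζ₂def
      have hζ₁eq : A' ::ₘ ζ₂ = ζ₁ := Multiset.cons_erase hA'
      have hA'mem : A' ∈ ζ := Multiset.mem_of_le (Multiset.erase_le _ _) hA'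
      have hA'min := hmin A' hA'mem
      have hA'e : (-g) ::ₘ A'.erase (-g) = A' := Multiset.cons_erase hgA'
      have hA'eg : (A'.erase (-g)).sum = g := by
        have h5 : -g + (A'.erase (-g)).sum = 0 := by
          rw [← Multiset.sum_cons, hA'e]; exact hA'min.2.1
        have := eq_neg_of_add_eq_zero_right h5
        rwa [neg_neg] at this
      set C := A.erase g + A'.erase (-g) with hCdef
      have hCsum : C.sum = 0 := by
        rw [hCdef, Multiset.sum_add, hAeg, hA'eg, neg_add_cancel]
      have hC0 : C ≠ 0 := by
        intro hc
        have hle5 : A.erase g ≤ C := by rw [hCdef]; exact Multiset.le_add_right _ _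
        have h5 : A.erase g = 0 := Multiset.le_zero.1 (hc ▸ hle5)
        have h7 : -g = 0 := by rw [← hAeg, h5]; simp
        exact hg (neg_eq_zero.1 h7)
      obtain ⟨ζC, hζC⟩ := fact_exists C hCsum
      have hζCc : 1 ≤ Multiset.card ζC := by
        rw [Nat.one_le_iff_ne_zero, Ne, Multiset.card_eq_zero]
        intro hc
        rw [hc] at hζC
        exact hC0 hζC.1.symm
      have hsumB : (ζC + ζ₂).sum = B := by
        have h5 : A + (A' + ζ₂.sum) = g ::ₘ (-g) ::ₘ B := by
          rw [← Multiset.sum_cons, hζ₁eq]; exact hsum1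
        have h5' : A + (A' + ζ₂.sum) =
            g ::ₘ (-g) ::ₘ (A.erase g + (A'.erase (-g) + ζ₂.sum)) := by
          conv_lhs => rw [← hAe, ← hA'e]
          simp only [Multiset.cons_add, Multiset.add_cons, add_assoc]
          rw [Multiset.cons_swap]
        have h6 : A.erase g + (A'.erase (-g) + ζ₂.sum) = B :=
          (Multiset.cons_inj_right _).1 ((Multiset.cons_inj_right _).1 (h5'.symm.trans h5))
        rw [Multiset.sum_add, hζC.1, hCdef, add_assoc]
        exact h6
      have hmem2 : Multiset.card (ζC + ζ₂) ∈ lengthSet B := by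
        refine ⟨ζC + ζ₂, ⟨hsumB, fun X hX => ?_⟩, rfl⟩
        rcases Multiset.mem_add.1 hX with h | h
        · exact hζC.2 X h
        · exact hmin X (Multiset.mem_of_le ((Multiset.erase_le _ _).trans (Multiset.erase_le _ _)) h)
      have h7 : Multiset.card (ζC + ζ₂) ≤ maxL B := le_csSup (lengthSet_bddAbove B) hmem2
      have h8 : Multiset.card (ζC + ζ₂) = Multiset.card ζC + Multiset.card ζ₂ :=
        Multiset.card_add _ _
      have h9 : Multiset.card ζ₁ = Multiset.card ζ₂ + 1 := by
        rw [← hζ₁eq, Multiset.card_cons]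
      omega
  · -- 1 + maxL B ≤ maxL B'
    obtain ⟨ζ, hζ, hζc⟩ := maxL_mem B hB
    have hmem : 1 + maxL B ∈ lengthSet B' := by
      refine ⟨(g ::ₘ (-g) ::ₘ 0) ::ₘ ζ, ⟨?_, ?_⟩, ?_⟩
      · rw [Multiset.sum_cons, hζ.1, Multiset.cons_add, Multiset.cons_add, zero_add]
      · intro X hX
        rcases Multiset.mem_cons.1 hX with h | h
        · exact h ▸ pair_min g hg
        · exact hζ.2 X h
      · rw [Multiset.card_cons, hζc]; omega
    exact le_csSup (lengthSet_bddAbove B') hmem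

lemma repair_aux [DecidableEq G] (S : Multiset G) (g : G) (hg : g ≠ 0) (k : ℕ)
    (T : Multiset (Multiset G)) (hcard : Multiset.card T = k + 1)
    (hzs : ∀ A ∈ T, IsZeroSumSeq A)
    (hle : T.sum ≤ g ::ₘ (-g) ::ₘ S)
    (A : Multiset G) (hA : A ∈ T) (hgA : g ∈ A) :
    HasKDisjointZeroSum k S := by
  set T₁ := T.erase A with hT₁def
  have hT : A ::ₘ T₁ = T := Multiset.cons_erase hA
  have hcard₁ : Multiset.card T₁ = k := by
    have := congrArg Multiset.card hT
    rw [Multiset.card_cons, hcard] at this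
    omega
  have hAz := hzs A hA
  have hAe : g ::ₘ A.erase g = A := Multiset.cons_erase hgA
  have hAeg : (A.erase g).sum = -g := by
    have h5 : g + (A.erase g).sum = 0 := by rw [← Multiset.sum_cons, hAe]; exact hAz.2
    exact eq_neg_of_add_eq_zero_right h5
  by_cases h : ∃ A' ∈ T₁, -g ∈ A'
  · obtain ⟨A', hA', hgA'⟩ := h
    set T₂ := T₁.erase A' with hT₂def
    have hT' : A' ::ₘ T₂ = T₁ := Multiset.cons_erase hA'
    have hcard₂ : Multiset.card T₂ + 1 = k := by
      have := congrArg Multiset.card hT'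
      rw [Multiset.card_cons, hcard₁] at this
      omega
    have hA'z := hzs A' (Multiset.mem_of_le (Multiset.erase_le _ _) hA')
    have hA'e : (-g) ::ₘ A'.erase (-g) = A' := Multiset.cons_erase hgA'
    have hA'eg : (A'.erase (-g)).sum = g := by
      have h5 : -g + (A'.erase (-g)).sum = 0 := by
        rw [← Multiset.sum_cons, hA'e]; exact hA'z.2
      have := eq_neg_of_add_eq_zero_right h5
      rwa [neg_neg] at this
    set C := A.erase g + A'.erase (-g) with hCdef
    have hCsum : C.sum = 0 := by
      rw [hCdef, Multiset.sum_add, hAeg, hA'eg, neg_add_cancel]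
    have hC0 : C ≠ 0 := by
      intro hc
      have hle5 : A.erase g ≤ C := by rw [hCdef]; exact Multiset.le_add_right _ _
      have h5 : A.erase g = 0 := Multiset.le_zero.1 (hc ▸ hle5)
      have h7 : -g = 0 := by rw [← hAeg, h5]; simp
      exact hg (neg_eq_zero.1 h7)
    refine ⟨C ::ₘ T₂, ?_, ?_, ?_⟩
    · rw [Multiset.card_cons]; omega
    · intro X hX
      rcases Multiset.mem_cons.1 hX with h' | h'
      · exact h' ▸ ⟨hC0, hCsum⟩
      · exact hzs X (Multiset.mem_of_le
          ((Multiset.erase_le _ _).trans (Multiset.erase_le _ _)) h')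
    · have hTsum : T.sum = g ::ₘ (-g) ::ₘ (C ::ₘ T₂).sum := by
        rw [← hT, ← hT', Multiset.sum_cons, Multiset.sum_cons, Multiset.sum_cons,
          ← hAe, ← hA'e, hCdef]
        simp only [Multiset.cons_add, Multiset.add_cons]
        rw [add_assoc, Multiset.cons_swap]
      rw [hTsum] at hle
      exact (Multiset.cons_le_cons_iff _).1 ((Multiset.cons_le_cons_iff _).1 hle)
  · push_neg at h
    refine ⟨T₁, hcard₁, fun X hX => hzs X (Multiset.mem_of_le (Multiset.erase_le _ _) hX), ?_⟩
    have hng : -g ∉ T₁.sum := by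
      intro hm
      obtain ⟨X, hX, hx⟩ := mem_msum hm
      exact h X hX hx
    have hsplit : T.sum = A + T₁.sum := by rw [← hT, Multiset.sum_cons]
    rw [Multiset.le_iff_count]
    intro x
    have hcx := Multiset.le_iff_count.1 hle x
    rw [hsplit] at hcx
    simp only [Multiset.count_add, Multiset.count_cons] at hcx
    by_cases hx1 : x = -g
    · subst hx1
      rw [Multiset.count_eq_zero.2 hng]
      exact Nat.zero_le _
    · by_cases hx2 : x = g
      · have hAc : 1 ≤ Multiset.count x A :=
          Multiset.one_le_count_iff_mem.2 (by rw [hx2]; exact hgA)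
        rw [if_pos hx2, if_neg hx1] at hcx
        omega
      · rw [if_neg hx2, if_neg hx1] at hcx
        omega

lemma repair [DecidableEq G] (S : Multiset G) (g : G) (hg : g ≠ 0) (k : ℕ)
    (T : Multiset (Multiset G)) (hcard : Multiset.card T = k + 1)
    (hzs : ∀ A ∈ T, IsZeroSumSeq A)
    (hle : T.sum ≤ g ::ₘ (-g) ::ₘ S) :
    HasKDisjointZeroSum k S := by
  by_cases hd : T.sum ≤ S
  · have hT0 : T ≠ 0 := by
      intro h; rw [h] at hcard; simp at hcard
    obtain ⟨A, hA⟩ := Multiset.exists_mem_of_ne_zero hT0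
    have hsum : (T.erase A).sum ≤ T.sum := by
      conv_rhs => rw [← Multiset.cons_erase hA]
      rw [Multiset.sum_cons]
      exact le_add_self
    refine ⟨T.erase A, ?_, fun X hX => hzs X (Multiset.mem_of_le (Multiset.erase_le _ _) hX),
      hsum.trans hd⟩
    rw [Multiset.card_erase_of_mem hA, hcard]
    rfl
  · have hx : ∃ x : G, Multiset.count x S < Multiset.count x T.sum := by
      by_contra hc
      push_neg at hc
      exact hd (Multiset.le_iff_count.2 hc)
    obtain ⟨x, hx⟩ := hx
    have hxg : x = g ∨ x = -g := by
      by_contra hc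
      push_neg at hc
      have h1 := Multiset.le_iff_count.1 hle x
      simp only [Multiset.count_cons, if_neg hc.1, if_neg hc.2] at h1
      omega
    have hxT : x ∈ T.sum := by
      rw [← Multiset.count_pos]; omega
    obtain ⟨A, hA, hxA⟩ := mem_msum hxT
    rcases hxg with h | h
    · rw [h] at hxA
      exact repair_aux S g hg k T hcard hzs hle A hA hxA
    · rw [h] at hxA
      have hle' : T.sum ≤ (-g) ::ₘ (-(-g)) ::ₘ S := by
        rw [neg_neg, Multiset.cons_swap]
        exact hle
      exact repair_aux S (-g) (neg_ne_zero.2 hg) k T hcard hzs hle' A hA hxA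

lemma exists_short_zerosum [Fintype G] (S : Multiset G)
    (h : Fintype.card G ≤ Multiset.card S) :
    ∃ T ≤ S, T ≠ 0 ∧ T.sum = 0 ∧ Multiset.card T ≤ Fintype.card G := by
  classical
  set n := Fintype.card G with hn
  set l := S.toList with hl
  have hlen : n ≤ l.length := by
    rw [hl, Multiset.length_toList]; exact h
  have key : ∀ i j : ℕ, i < j → j ≤ l.length → (l.take i).sum = (l.take j).sum →
      ∃ T ≤ S, T ≠ 0 ∧ T.sum = 0 ∧ Multiset.card T ≤ j - i := by
    intro i j hij hjl hsum
    set L : List G := (l.take j).drop i with hL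
    have hsubl : L.Sublist l := ((l.take j).drop_sublist i).trans (l.take_sublist j)
    refine ⟨(L : Multiset G), ?_, ?_, ?_, ?_⟩
    · have : (L : Multiset G) ≤ (l : Multiset G) := Multiset.coe_le.2 hsubl.subperm
      rwa [hl, Multiset.coe_toList] at this
    · rw [Ne, Multiset.coe_eq_zero, ← List.length_pos_iff_ne_nil.not_left]
      push_neg
      rw [hL, List.length_drop, List.length_take]
      omega
    · have hsplit : (l.take j).take i ++ L = l.take j := List.take_append_drop i (l.take j)
      have htt : (l.take j).take i = l.take i := by
        rw [List.take_take, min_eq_left (le_of_lt hij)]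
      have h5 := congrArg List.sum hsplit
      rw [List.sum_append, htt, ← hsum] at h5
      rw [Multiset.sum_coe]
      exact add_eq_left.1 h5
    · rw [Multiset.coe_card, hL, List.length_drop, List.length_take]
      omega
  have hinj : ∃ x y : Fin (n + 1), x ≠ y ∧
      (l.take (x : ℕ)).sum = (l.take (y : ℕ)).sum := by
    apply Fintype.exists_ne_map_eq_of_card_lt (fun i : Fin (n + 1) => (l.take (i : ℕ)).sum)
    rw [Fintype.card_fin]
    omega
  obtain ⟨x, y, hxy, hsum⟩ := hinj
  have hxyn : (x : ℕ) ≠ (y : ℕ) := fun hc => hxy (Fin.ext hc)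
  rcases hxyn.lt_or_gt with hlt | hlt
  · obtain ⟨T, h1, h2, h3, h4⟩ := key x y hlt (by omega) hsum
    exact ⟨T, h1, h2, h3, h4.trans (by omega)⟩
  · obtain ⟨T, h1, h2, h3, h4⟩ := key y x hlt (by omega) hsum.symm
    exact ⟨T, h1, h2, h3, h4.trans (by omega)⟩

lemma exists_k [Fintype G] [DecidableEq G] :
    ∀ (k : ℕ) (S : Multiset G), k * Fintype.card G ≤ Multiset.card S →
      HasKDisjointZeroSum k S := by
  intro k
  induction k with
  | zero => exact fun S _ => ⟨0, rfl, by simp, by simp⟩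
  | succ k ih =>
    intro S hS
    set n := Fintype.card G with hn
    have hnS : n ≤ Multiset.card S := by
      have : n ≤ (k + 1) * n := by nlinarith
      omega
    obtain ⟨T₀, hT₀S, hT₀0, hT₀s, hT₀c⟩ := exists_short_zerosum S hnS
    have hcardsub : Multiset.card (S - T₀) = Multiset.card S - Multiset.card T₀ := by
      have h1 : T₀ + (S - T₀) = S := add_tsub_cancel_of_le hT₀S
      have h2 := congrArg Multiset.card h1
      rw [Multiset.card_add] at h2
      omega
    have hrec : k * n ≤ Multiset.card (S - T₀) := by
      have h3 : k * n + n = (k + 1) * n := by ring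
      omega
    obtain ⟨T', hc, hz, hle⟩ := ih (S - T₀) hrec
    refine ⟨T₀ ::ₘ T', by rw [Multiset.card_cons, hc], ?_, ?_⟩
    · intro X hX
      rcases Multiset.mem_cons.1 hX with h' | h'
      · exact h' ▸ ⟨hT₀0, hT₀s⟩
      · exact hz X h'
    · rw [Multiset.sum_cons]
      calc T₀ + T'.sum ≤ T₀ + (S - T₀) := add_le_add_right hle T₀
        _ = S := add_tsub_cancel_of_le hT₀S

end Aux

theorem statement1 {G : Type*} [AddCommGroup G] [Fintype G]
    (hG : 2 ≤ Fintype.card G) :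
    (∀ B : Multiset G, B.sum = 0 → ∀ g : G, g ≠ 0 →
      maxL (g ::ₘ (-g) ::ₘ B) = 1 + maxL B) ∧
    ∀ k : ℕ, 1 ≤ k → Dk G k + 2 ≤ Dk G (k + 1) := by
  classical
  obtain ⟨g0, hg0⟩ := Fintype.exists_ne_of_one_lt_card hG (0 : G)
  constructor
  · exact fun B hB g hg => maxL_cons B hB g hg
  · intro k hk
    set Bs : ℕ → Set ℕ :=
      fun j => {ℓ | ∀ S : Multiset G, ℓ ≤ Multiset.card S → HasKDisjointZeroSum j S} with hBs
    have hne : ∀ j, (Bs j).Nonempty := by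
      intro j
      exact ⟨j * Fintype.card G, fun S hS => exists_k j S hS⟩
    have hDk : ∀ j, Dk G j = sInf (Bs j) := fun j => rfl
    set m := Dk G (k + 1) with hm
    have hmem : m ∈ Bs (k + 1) := by
      rw [hm, hDk]
      exact Nat.sInf_mem (hne (k + 1))
    have hm2 : 2 ≤ m := by
      by_contra hc
      push_neg at hc
      have h1 : m ≤ Multiset.card ({g0} : Multiset G) := by
        simp only [Multiset.card_singleton]
        omega
      obtain ⟨T, hTc, hTz, hTle⟩ := hmem _ h1
      have h2 := card_le_sum_of_ne_zero (fun A hA => (hTz A hA).1)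
      have h3 := Multiset.card_le_card hTle
      simp only [Multiset.card_singleton] at h3
      omega
    have hsub : m - 2 ∈ Bs k := by
      intro S hS
      have hcard' : m ≤ Multiset.card (g0 ::ₘ (-g0) ::ₘ S) := by
        simp only [Multiset.card_cons]
        omega
      obtain ⟨T, hTc, hTz, hTle⟩ := hmem _ hcard'
      exact repair S g0 hg0 k T hTc hTz hTle
    have hfin : Dk G k ≤ m - 2 := Nat.sInf_le hsub
    omega
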